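/- Let F and G be nonconstant meromorphic functions sharing the value 1 with weight t, where 0 ≤ t < ∞. Then N̄(r,1;F) + N̄(r,1;G) − N_E^{1)}(r,1;F) + (t − 1/2)·N̄_*(r,1;F,G) ≤ (1/2)·(N(r,1;F) + N(r,1;G)). -/

import Mathlib

open Complex MeasureTheory Filter Classical

noncomputable section

namespace Nev

/-- Multiplicity of `z` as a zero of `f` (0 if `f` is not meromorphic at `z`,
or if `f` does not vanish at `z`, or if `f` vanishes identically near `z`). -/
noncomputable def zm (f : ℂ → ℂ) (z : ℂ) : ℕ :=
  if h : MeromorphicAt f z then (max 0 ((meromorphicOrderAt f z).untopD 0)).toNat else 0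

/-- Multiplicity of `z` as a pole of `f`. -/
noncomputable def pm (f : ℂ → ℂ) (z : ℂ) : ℕ :=
  if h : MeromorphicAt f z then (max 0 (-((meromorphicOrderAt f z).untopD 0))).toNat else 0

/-- Integrated counting function associated to a multiplicity weight `w`:
`N(r) = Σ_{0<|a|≤r} w(a)·log(r/|a|) + w(0)·log r`. -/
noncomputable def Ncnt (w : ℂ → ℕ) (r : ℝ) : ℝ :=
  (∑' z : ℂ, if ‖z‖ ≤ r ∧ z ≠ 0 then (w z : ℝ) * Real.log (r / ‖z‖) else 0)
    + (w 0 : ℝ) * Real.log r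

/-- `log⁺`. -/
noncomputable def logPlus (x : ℝ) : ℝ := Real.log (max 1 x)

/-- Nevanlinna proximity function `m(r,f)`. -/
noncomputable def prox (f : ℂ → ℂ) (r : ℝ) : ℝ :=
  (2 * Real.pi)⁻¹ * ∫ θ in (0:ℝ)..(2 * Real.pi),
    logPlus (‖f ((r : ℂ) * Complex.exp (θ * Complex.I))‖)

/-- Nevanlinna characteristic `T(r,f) = m(r,f) + N(r,f)`. -/
noncomputable def T (f : ℂ → ℂ) (r : ℝ) : ℝ := prox f r + Ncnt (pm f) r

/-- Zero-multiplicity of `f - a`. -/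
noncomputable def am (f : ℂ → ℂ) (a : ℂ) : ℂ → ℕ := fun z => zm (fun w => f w - a) z

/-- Truncation to multiplicity 1 (reduced counting). -/
def red (w : ℂ → ℕ) : ℂ → ℕ := fun z => min (w z) 1

/-- `s` is a small error term for `f` outside the exceptional set `E`:
`E` has finite linear measure and `s(r) = o(T(r,f))` as `r → ∞` outside `E`. -/
def IsSmall (s : ℝ → ℝ) (f : ℂ → ℂ) (E : Set ℝ) : Prop :=
  volume E < ⊤ ∧ ∀ ε > 0, ∀ᶠ r in atTop, r ∉ E → |s r| ≤ ε * T f r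

/-- `f` is nonconstant. -/
def Noncst (f : ℂ → ℂ) : Prop := ∃ z w, f z ≠ f w

end Nev

open Nev


section AuxProofs

lemma analyticAt_sub_zpow {w z₀ : ℂ} (h : w ≠ z₀) (n : ℤ) :
    AnalyticAt ℂ (fun z : ℂ => (z - z₀) ^ n) w := by
  have hb : AnalyticAt ℂ (fun z : ℂ => z - z₀) w := analyticAt_id.sub analyticAt_const
  rcases n with m | m
  · simpa using hb.fun_pow m
  · simp only [zpow_negSucc]
    exact ((hb.fun_pow (m+1)).inv (pow_ne_zero _ (sub_ne_zero.mpr h)))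

lemma zm_eventually_zero {f : ℂ → ℂ} {z₀ : ℂ} (hf : MeromorphicAt f z₀) :
    ∀ᶠ w in nhdsWithin z₀ {z₀}ᶜ, zm f w = 0 := by
  by_cases h : meromorphicOrderAt f z₀ = ⊤
  · have h0 : ∀ᶠ z in nhdsWithin z₀ {z₀}ᶜ, f z = 0 := meromorphicOrderAt_eq_top_iff.mp h
    rw [eventually_nhdsWithin_iff] at h0 ⊢
    obtain ⟨U, hU, hUo, hz₀U⟩ := eventually_nhds_iff.mp h0
    refine eventually_of_mem (hUo.mem_nhds hz₀U) ?_
    intro w hwU hwne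
    have hUo' : IsOpen (U \ {z₀}) := hUo.sdiff isClosed_singleton
    have hmem : w ∈ U \ {z₀} := ⟨hwU, hwne⟩
    have hev0 : ∀ᶠ z in nhds w, f z = 0 :=
      eventually_of_mem (hUo'.mem_nhds hmem) (fun z hz => hU z hz.1 hz.2)
    unfold zm
    split_ifs with h'
    · rw [meromorphicOrderAt_eq_top_iff.mpr (hev0.filter_mono nhdsWithin_le_nhds)]
      simp
    · rfl
  · obtain ⟨n, hn⟩ := WithTop.ne_top_iff_exists.mp h
    obtain ⟨g, hg, hgne, hfeq⟩ := (meromorphicOrderAt_eq_int_iff hf).mp hn.symm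
    have hga : ∀ᶠ w in nhds z₀, AnalyticAt ℂ g w := hg.eventually_analyticAt
    have hgz : ∀ᶠ w in nhds z₀, g w ≠ 0 := hg.continuousAt.eventually_ne hgne
    rw [eventually_nhdsWithin_iff] at hfeq ⊢
    obtain ⟨U, hU, hUo, hz₀U⟩ := eventually_nhds_iff.mp ((hfeq.and hga).and hgz)
    refine eventually_of_mem (hUo.mem_nhds hz₀U) ?_
    intro w hwU hwne
    have hUo' : IsOpen (U \ {z₀}) := hUo.sdiff isClosed_singleton
    have hmem : w ∈ U \ {z₀} := ⟨hwU, hwne⟩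
    have hh : AnalyticAt ℂ (fun z => (z - z₀) ^ n • g z) w :=
      (analyticAt_sub_zpow hwne n).smul ((hU w hwU).1.2)
    have hhne : (fun z => (z - z₀) ^ n • g z) w ≠ 0 := by
      simp only
      exact smul_ne_zero (zpow_ne_zero _ (sub_ne_zero.mpr hwne)) (hU w hwU).2
    have hmw : MeromorphicAt f w := by
      apply hh.meromorphicAt.congr
      apply Filter.EventuallyEq.symm
      apply Filter.EventuallyEq.filter_mono _ nhdsWithin_le_nhds
      exact eventually_of_mem (hUo'.mem_nhds hmem) (fun z hz => (hU z hz.1).1.1 hz.2)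
    have horder : meromorphicOrderAt f w = (0 : ℤ) := by
      rw [meromorphicOrderAt_eq_int_iff hmw]
      refine ⟨fun z => (z - z₀) ^ n • g z, hh, hhne, ?_⟩
      apply Filter.EventuallyEq.filter_mono _ nhdsWithin_le_nhds
      refine eventually_of_mem (hUo'.mem_nhds hmem) (fun z hz => ?_)
      simp only [zpow_zero, one_smul]
      exact (hU z hz.1).1.1 hz.2
    unfold zm
    rw [dif_pos hmw, horder]
    simp

lemma zm_finite {f : ℂ → ℂ} (hf : ∀ z : ℂ, MeromorphicAt f z) (r : ℝ) :
    {z : ℂ | ‖z‖ ≤ r ∧ zm f z ≠ 0}.Finite := by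
  by_contra hinf
  replace hinf : {z : ℂ | ‖z‖ ≤ r ∧ zm f z ≠ 0}.Infinite := hinf
  have hsub : {z : ℂ | ‖z‖ ≤ r ∧ zm f z ≠ 0} ⊆ Metric.closedBall 0 r := by
    intro z hz
    simpa [Metric.mem_closedBall, Complex.dist_eq] using hz.1
  obtain ⟨x, -, hx⟩ := hinf.exists_accPt_of_subset_isCompact (isCompact_closedBall 0 r) hsub
  rw [accPt_iff_frequently] at hx
  have hev := zm_eventually_zero (hf x)
  rw [eventually_nhdsWithin_iff] at hev
  obtain ⟨y, ⟨hy1, hy2⟩, hy3⟩ := (hx.and_eventually hev).exists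
  exact hy2.2 (hy3 hy1)

/-- The summand appearing in `Ncnt`. -/
noncomputable def trm (w : ℂ → ℕ) (r : ℝ) (z : ℂ) : ℝ :=
  if ‖z‖ ≤ r ∧ z ≠ 0 then (w z : ℝ) * Real.log (r / ‖z‖) else 0

lemma Ncnt_eq_sum (w : ℂ → ℕ) (r : ℝ) (s : Finset ℂ) (h : ∀ z ∉ s, trm w r z = 0) :
    Ncnt w r = (∑ z ∈ s, trm w r z) + (w 0 : ℝ) * Real.log r := by
  rw [show Ncnt w r = (∑' z, trm w r z) + (w 0 : ℝ) * Real.log r from rfl, tsum_eq_sum h]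

lemma key_ineq (m n t : ℕ) (h : min m (t+1) = min n (t+1)) :
    ((min m 1 : ℕ) : ℝ) + ((min n 1 : ℕ) : ℝ)
      - ((if m = 1 ∧ n = 1 then 1 else 0 : ℕ) : ℝ)
      + ((t:ℝ) - 1/2) * ((if 1 ≤ m ∧ 1 ≤ n ∧ m ≠ n then 1 else 0 : ℕ) : ℝ)
      ≤ ((m:ℝ) + (n:ℝ)) / 2 := by
  rcases Nat.eq_zero_or_pos m with hm | hm
  · have hn : n = 0 := by omega
    subst hm hn
    norm_num
  rcases Nat.eq_zero_or_pos n with hn | hn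
  · exfalso; omega
  by_cases hmn : m = n
  · subst hmn
    by_cases h1 : m = 1
    · subst h1; norm_num
    · have h2 : 2 ≤ m := by omega
      have hmin : min m 1 = 1 := by omega
      have h2' : (2:ℝ) ≤ (m:ℝ) := by exact_mod_cast h2
      rw [hmin, if_neg (by omega : ¬(m = 1 ∧ m = 1)),
        if_neg (by omega : ¬(1 ≤ m ∧ 1 ≤ m ∧ m ≠ m))]
      push_cast
      linarith
  · have h3 : 2*t + 3 ≤ m + n := by omega
    have hm1 : min m 1 = 1 := by omega
    have hn1 : min n 1 = 1 := by omega
    have h3' : (2*(t:ℝ) + 3) ≤ (m:ℝ) + (n:ℝ) := by exact_mod_cast h3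
    rw [hm1, hn1, if_neg (by omega : ¬(m = 1 ∧ n = 1)), if_pos ⟨hm, hn, hmn⟩]
    push_cast
    linarith

end AuxProofs

/-- Lemma 3.2: if nonconstant meromorphic `F, G` share the value 1 with weight `t`, then
`N̄(r,1;F) + N̄(r,1;G) − N_E^{1)}(r,1;F) + (t − 1/2)·N̄_*(r,1;F,G)
≤ (1/2)(N(r,1;F) + N(r,1;G))`. -/
theorem weighted_sharing_counting_inequality (F G : ℂ → ℂ) (t : ℕ)
    (hF : MeromorphicOn F (Set.univ : Set ℂ)) (hG : MeromorphicOn G (Set.univ : Set ℂ))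
    (hFnc : Noncst F) (hGnc : Noncst G)
    (hshare : ∀ z : ℂ, min (am F 1 z) (t + 1) = min (am G 1 z) (t + 1)) :
    ∀ r : ℝ, 1 ≤ r →
      Ncnt (red (am F 1)) r + Ncnt (red (am G 1)) r
          - Ncnt (fun z => if am F 1 z = 1 ∧ am G 1 z = 1 then 1 else 0) r
          + ((t : ℝ) - 1 / 2) *
            Ncnt (fun z => if 1 ≤ am F 1 z ∧ 1 ≤ am G 1 z ∧ am F 1 z ≠ am G 1 z
              then 1 else 0) r
        ≤ (Ncnt (am F 1) r + Ncnt (am G 1) r) / 2 := by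
  intro r hr
  classical
  have hFm : ∀ z : ℂ, MeromorphicAt (fun w => F w - 1) z :=
    fun z => (hF z trivial).sub (MeromorphicAt.const 1 z)
  have hGm : ∀ z : ℂ, MeromorphicAt (fun w => G w - 1) z :=
    fun z => (hG z trivial).sub (MeromorphicAt.const 1 z)
  have hfin : {z : ℂ | ‖z‖ ≤ r ∧ (am F 1 z ≠ 0 ∨ am G 1 z ≠ 0)}.Finite := by
    refine ((zm_finite hFm r).union (zm_finite hGm r)).subset ?_
    rintro z ⟨h1, h2 | h2⟩
    exacts [Or.inl ⟨h1, h2⟩, Or.inr ⟨h1, h2⟩]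
  set s : Finset ℂ := hfin.toFinset with hs
  -- vanishing of summands outside s
  have hvan : ∀ (w : ℂ → ℕ), (∀ z, am F 1 z = 0 → am G 1 z = 0 → w z = 0) →
      ∀ z ∉ s, trm w r z = 0 := by
    intro w hw z hz
    rw [hs, Set.Finite.mem_toFinset] at hz
    simp only [Set.mem_setOf_eq, not_and, not_or, not_not] at hz
    unfold trm
    split_ifs with hc
    · rw [hw z (hz hc.1).1 (hz hc.1).2, Nat.cast_zero, zero_mul]
    · rfl
  have hA := hvan (red (am F 1)) (fun z h1 _ => by simp [red, h1])
  have hB := hvan (red (am G 1)) (fun z _ h2 => by simp [red, h2])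
  have hC := hvan (fun z => if am F 1 z = 1 ∧ am G 1 z = 1 then 1 else 0)
    (fun z h1 _ => by simp [h1])
  have hD := hvan (fun z => if 1 ≤ am F 1 z ∧ 1 ≤ am G 1 z ∧ am F 1 z ≠ am G 1 z then 1 else 0)
    (fun z h1 _ => by simp [h1])
  have hP := hvan (am F 1) (fun z h1 _ => h1)
  have hQ := hvan (am G 1) (fun z _ h2 => h2)
  rw [Ncnt_eq_sum _ r s hA, Ncnt_eq_sum _ r s hB, Ncnt_eq_sum _ r s hC,
    Ncnt_eq_sum _ r s hD, Ncnt_eq_sum _ r s hP, Ncnt_eq_sum _ r s hQ]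
  -- termwise inequality
  have hterm : ∀ z ∈ s,
      trm (red (am F 1)) r z + trm (red (am G 1)) r z
        - trm (fun z => if am F 1 z = 1 ∧ am G 1 z = 1 then 1 else 0) r z
        + ((t : ℝ) - 1 / 2) *
          trm (fun z => if 1 ≤ am F 1 z ∧ 1 ≤ am G 1 z ∧ am F 1 z ≠ am G 1 z
            then 1 else 0) r z
      ≤ (trm (am F 1) r z + trm (am G 1) r z) / 2 := by
    intro z _
    by_cases hc : ‖z‖ ≤ r ∧ z ≠ 0
    · simp only [trm, if_pos hc, red]
      have hc0 : (0:ℝ) ≤ Real.log (r / ‖z‖) :=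
        Real.log_nonneg ((one_le_div (norm_pos_iff.mpr hc.2)).mpr hc.1)
      have hk := key_ineq (am F 1 z) (am G 1 z) t (hshare z)
      have h2 := mul_le_mul_of_nonneg_right hk hc0
      set c := Real.log (r / ‖z‖)
      calc ((min (am F 1 z) 1 : ℕ) : ℝ) * c + ((min (am G 1 z) 1 : ℕ) : ℝ) * c
            - ((if am F 1 z = 1 ∧ am G 1 z = 1 then 1 else 0 : ℕ) : ℝ) * c
            + ((t : ℝ) - 1 / 2) *
              (((if 1 ≤ am F 1 z ∧ 1 ≤ am G 1 z ∧ am F 1 z ≠ am G 1 z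
                then 1 else 0 : ℕ) : ℝ) * c)
          = (((min (am F 1 z) 1 : ℕ) : ℝ) + ((min (am G 1 z) 1 : ℕ) : ℝ)
              - ((if am F 1 z = 1 ∧ am G 1 z = 1 then 1 else 0 : ℕ) : ℝ)
              + ((t : ℝ) - 1 / 2) *
                ((if 1 ≤ am F 1 z ∧ 1 ≤ am G 1 z ∧ am F 1 z ≠ am G 1 z
                  then 1 else 0 : ℕ) : ℝ)) * c := by ring
        _ ≤ (((am F 1 z : ℝ) + (am G 1 z : ℝ)) / 2) * c := h2
        _ = ((am F 1 z : ℝ) * c + (am G 1 z : ℝ) * c) / 2 := by ring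
    · simp only [trm, if_neg hc]
      norm_num
  have hsum := Finset.sum_le_sum hterm
  have e1 : ∑ z ∈ s, (trm (red (am F 1)) r z + trm (red (am G 1)) r z
        - trm (fun z => if am F 1 z = 1 ∧ am G 1 z = 1 then 1 else 0) r z
        + ((t : ℝ) - 1 / 2) *
          trm (fun z => if 1 ≤ am F 1 z ∧ 1 ≤ am G 1 z ∧ am F 1 z ≠ am G 1 z
            then 1 else 0) r z)
      = (∑ z ∈ s, trm (red (am F 1)) r z) + (∑ z ∈ s, trm (red (am G 1)) r z)
        - (∑ z ∈ s, trm (fun z => if am F 1 z = 1 ∧ am G 1 z = 1 then 1 else 0) r z)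
        + ((t : ℝ) - 1 / 2) *
          (∑ z ∈ s, trm (fun z => if 1 ≤ am F 1 z ∧ 1 ≤ am G 1 z ∧ am F 1 z ≠ am G 1 z
            then 1 else 0) r z) := by
    simp only [Finset.sum_add_distrib, Finset.sum_sub_distrib, Finset.mul_sum]
  have e2 : ∑ z ∈ s, (trm (am F 1) r z + trm (am G 1) r z) / 2
      = ((∑ z ∈ s, trm (am F 1) r z) + (∑ z ∈ s, trm (am G 1) r z)) / 2 := by
    simp only [add_div, Finset.sum_add_distrib, Finset.sum_div]
  rw [e1, e2] at hsum
  -- the term at z = 0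
  have hr0 : (0:ℝ) ≤ Real.log r := Real.log_nonneg hr
  have hk0 := key_ineq (am F 1 0) (am G 1 0) t (hshare 0)
  have h0 := mul_le_mul_of_nonneg_right hk0 hr0
  have e0 : ((min (am F 1 0) 1 : ℕ) : ℝ) + ((min (am G 1 0) 1 : ℕ) : ℝ)
      - ((if am F 1 0 = 1 ∧ am G 1 0 = 1 then 1 else 0 : ℕ) : ℝ)
      + ((t : ℝ) - 1 / 2) *
        ((if 1 ≤ am F 1 0 ∧ 1 ≤ am G 1 0 ∧ am F 1 0 ≠ am G 1 0 then 1 else 0 : ℕ) : ℝ)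
      = ((red (am F 1) 0 : ℕ) : ℝ) + ((red (am G 1) 0 : ℕ) : ℝ)
      - ((if am F 1 0 = 1 ∧ am G 1 0 = 1 then 1 else 0 : ℕ) : ℝ)
      + ((t : ℝ) - 1 / 2) *
        ((if 1 ≤ am F 1 0 ∧ 1 ≤ am G 1 0 ∧ am F 1 0 ≠ am G 1 0 then 1 else 0 : ℕ) : ℝ) := by
    simp [red]
  rw [e0] at h0
  nlinarith [hsum, h0]
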